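/- For integers 1 ≤ m < n with m ≥ 2, deleting one vertex of the smaller part of K_{m,n} decreases the strong domination number from m to m − 1; hence st_{γ_st}(K_{m,n}) = 1. -/

import Mathlib

open SimpleGraph

/-- `D` is a strong dominating set of `G`: every vertex outside `D` has a neighbor
in `D` whose degree is at least its own. -/
def IsStrongDominating {V : Type*} (G : SimpleGraph V) (D : Set V) : Prop :=
  ∀ v ∉ D, ∃ u ∈ D, G.Adj v u ∧ (G.neighborSet v).ncard ≤ (G.neighborSet u).ncard

/-- The strong domination number. -/
noncomputable def gammaSt {V : Type*} (G : SimpleGraph V) : ℕ :=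
  sInf {n | ∃ D : Set V, D.Finite ∧ IsStrongDominating G D ∧ D.ncard = n}

/-- The stability of the strong domination number: the minimum size of a vertex set
whose removal changes the strong domination number. -/
noncomputable def stGammaSt {V : Type*} (G : SimpleGraph V) : ℕ :=
  sInf {n | ∃ S : Set V, S.Finite ∧ S.ncard = n ∧ gammaSt (G.induce Sᶜ) ≠ gammaSt G}

/-- The join of two graphs. -/
def joinG {V W : Type*} (G : SimpleGraph V) (H : SimpleGraph W) : SimpleGraph (V ⊕ W) :=
  SimpleGraph.fromRel (fun x y =>
    match x, y with
    | Sum.inl a, Sum.inl b => G.Adj a b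
    | Sum.inr a, Sum.inr b => H.Adj a b
    | _, _ => True)

/-- `n` disjoint copies of `K₂`. -/
def nK2 (n : ℕ) : SimpleGraph (Fin n × Fin 2) where
  Adj x y := x.1 = y.1 ∧ x.2 ≠ y.2
  symm := ⟨fun x y h => ⟨h.1.symm, h.2.symm⟩⟩
  loopless := ⟨fun x h => h.2 rfl⟩


lemma ncard_neighborSet_iso {V W : Type*} {G : SimpleGraph V} {H : SimpleGraph W}
    (e : G ≃g H) (v : V) : (G.neighborSet v).ncard = (H.neighborSet (e v)).ncard := by
  rw [← Nat.card_coe_set_eq, ← Nat.card_coe_set_eq]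
  exact Nat.card_congr (e.mapNeighborSet v)

lemma isStrongDominating_image {V W : Type*} {G : SimpleGraph V} {H : SimpleGraph W}
    (e : G ≃g H) {D : Set V} (h : IsStrongDominating G D) :
    IsStrongDominating H (⇑e '' D) := by
  intro v hv
  have hv' : e.symm v ∉ D := by
    intro hc
    exact hv ⟨e.symm v, hc, by simp⟩
  obtain ⟨u, hu, hadj, hcard⟩ := h (e.symm v) hv'
  refine ⟨e u, ⟨u, hu, rfl⟩, ?_, ?_⟩
  · have := e.map_adj_iff.mpr hadj  -- maybe map_rel_iff
    simpa using this
  · rw [← ncard_neighborSet_iso e u]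
    calc (H.neighborSet v).ncard = (G.neighborSet (e.symm v)).ncard := by
          rw [ncard_neighborSet_iso e (e.symm v)]; simp
      _ ≤ _ := hcard

lemma gammaSt_set_subset {V W : Type*} {G : SimpleGraph V} {H : SimpleGraph W} (e : G ≃g H) :
    {n | ∃ D : Set V, D.Finite ∧ IsStrongDominating G D ∧ D.ncard = n} ⊆
    {n | ∃ D : Set W, D.Finite ∧ IsStrongDominating H D ∧ D.ncard = n} := by
  rintro k ⟨D, hfin, hdom, hcard⟩
  exact ⟨⇑e '' D, hfin.image _, isStrongDominating_image e hdom,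
    by rw [Set.ncard_image_of_injective _ e.injective]; exact hcard⟩

lemma gammaSt_iso {V W : Type*} {G : SimpleGraph V} {H : SimpleGraph W} (e : G ≃g H) :
    gammaSt G = gammaSt H := by
  unfold gammaSt
  congr 1
  exact le_antisymm (gammaSt_set_subset e) (gammaSt_set_subset e.symm)

lemma neighborSet_inl {α β : Type*} (a : α) :
    (completeBipartiteGraph α β).neighborSet (Sum.inl a) = Set.range Sum.inr := by
  ext w
  cases w <;> simp [completeBipartiteGraph]

lemma neighborSet_inr {α β : Type*} (b : β) :
    (completeBipartiteGraph α β).neighborSet (Sum.inr b) = Set.range Sum.inl := by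
  ext w
  cases w <;> simp [completeBipartiteGraph]

lemma ncard_range_inl {α β : Type*} [Fintype α] :
    (Set.range (Sum.inl : α → α ⊕ β)).ncard = Fintype.card α := by
  rw [← Set.image_univ, Set.ncard_image_of_injective _ Sum.inl_injective, Set.ncard_univ,
    Nat.card_eq_fintype_card]

lemma ncard_range_inr {α β : Type*} [Fintype β] :
    (Set.range (Sum.inr : β → α ⊕ β)).ncard = Fintype.card β := by
  rw [← Set.image_univ, Set.ncard_image_of_injective _ Sum.inr_injective, Set.ncard_univ,
    Nat.card_eq_fintype_card]

lemma gammaSt_completeBipartite {α β : Type*} [Fintype α] [Fintype β] [Nonempty α]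
    (h : Fintype.card α < Fintype.card β) :
    gammaSt (completeBipartiteGraph α β) = Fintype.card α := by
  have hmem : Fintype.card α ∈
      {n | ∃ D : Set (α ⊕ β), D.Finite ∧ IsStrongDominating (completeBipartiteGraph α β) D ∧
        D.ncard = n} := by
    refine ⟨Set.range Sum.inl, Set.toFinite _, ?_, ncard_range_inl⟩
    intro v hv
    obtain (a | b) := v
    · exact absurd ⟨a, rfl⟩ hv
    · obtain ⟨a⟩ := ‹Nonempty α›
      refine ⟨Sum.inl a, ⟨a, rfl⟩, by simp, ?_⟩
      rw [neighborSet_inl, neighborSet_inr, ncard_range_inl, ncard_range_inr]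
      exact h.le
  refine le_antisymm (Nat.sInf_le hmem) (le_csInf ⟨_, hmem⟩ ?_)
  rintro k ⟨D, hfin, hdom, rfl⟩
  have hsub : Set.range (Sum.inl : α → α ⊕ β) ⊆ D := by
    rintro _ ⟨a, rfl⟩
    by_contra hna
    obtain ⟨u, hu, hadj, hcard⟩ := hdom _ hna
    obtain (a' | b) := u
    · simp [completeBipartiteGraph] at hadj
    · rw [neighborSet_inl, neighborSet_inr, ncard_range_inl, ncard_range_inr] at hcard
      omega
  calc Fintype.card α = (Set.range (Sum.inl : α → α ⊕ β)).ncard := ncard_range_inl.symm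
    _ ≤ D.ncard := Set.ncard_le_ncard hsub hfin

def induceComplIso (m n : ℕ) (u : Fin m) :
    ((completeBipartiteGraph (Fin m) (Fin n)).induce {Sum.inl u}ᶜ) ≃g
      completeBipartiteGraph {x : Fin m // x ≠ u} (Fin n) where
  toFun w := match w with
    | ⟨Sum.inl a, h⟩ => Sum.inl ⟨a, fun hc => h (by simp [hc])⟩
    | ⟨Sum.inr b, _⟩ => Sum.inr b
  invFun x := match x with
    | Sum.inl ⟨a, h⟩ => ⟨Sum.inl a, by simp [h]⟩
    | Sum.inr b => ⟨Sum.inr b, by simp⟩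
  left_inv := by rintro ⟨(a | b), h⟩ <;> rfl
  right_inv := by rintro (⟨a, h⟩ | b) <;> rfl
  map_rel_iff' := by
    rintro ⟨(a | b), ha⟩ ⟨(c | d), hc⟩ <;>
      simp [completeBipartiteGraph, SimpleGraph.comap]

theorem stGammaSt_completeBipartite_one (m n : ℕ) (hm : 2 ≤ m) (hmn : m < n) :
    ∀ u : Fin m,
      gammaSt ((completeBipartiteGraph (Fin m) (Fin n)).induce {Sum.inl u}ᶜ) = m - 1 ∧
      stGammaSt (completeBipartiteGraph (Fin m) (Fin n)) = 1 := by
  intro u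
  have hcard : Fintype.card {x : Fin m // x ≠ u} = m - 1 := by
    rw [Fintype.card_subtype_compl]
    simp
  have hne : Nonempty {x : Fin m // x ≠ u} := by
    rw [← Fintype.card_pos_iff, hcard]; omega
  have h1 : gammaSt ((completeBipartiteGraph (Fin m) (Fin n)).induce {Sum.inl u}ᶜ) = m - 1 := by
    rw [gammaSt_iso (induceComplIso m n u), gammaSt_completeBipartite (by simp [hcard]; omega),
      hcard]
  have hG : gammaSt (completeBipartiteGraph (Fin m) (Fin n)) = m := by
    have : Nonempty (Fin m) := ⟨u⟩
    rw [gammaSt_completeBipartite (by simp [hmn])]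
    simp
  refine ⟨h1, ?_⟩
  have hmem : 1 ∈ {k | ∃ S : Set (Fin m ⊕ Fin n), S.Finite ∧ S.ncard = k ∧
      gammaSt ((completeBipartiteGraph (Fin m) (Fin n)).induce Sᶜ) ≠
        gammaSt (completeBipartiteGraph (Fin m) (Fin n))} := by
    refine ⟨{Sum.inl u}, Set.finite_singleton _, Set.ncard_singleton _, ?_⟩
    rw [h1, hG]; omega
  have hle : stGammaSt (completeBipartiteGraph (Fin m) (Fin n)) ≤ 1 := Nat.sInf_le hmem
  have hne0 : stGammaSt (completeBipartiteGraph (Fin m) (Fin n)) ≠ 0 := by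
    unfold stGammaSt
    rw [Ne, Nat.sInf_eq_zero]
    rintro (⟨S, hfin, hcard0, hneq⟩ | hempty)
    · rw [Set.ncard_eq_zero hfin] at hcard0
      subst hcard0
      rw [Set.compl_empty] at hneq
      exact hneq (gammaSt_iso (induceUnivIso _))
    · exact absurd hmem (by rw [hempty]; simp)
  unfold stGammaSt at *
  omega
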